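/- arXiv:2501.04720 — 3 statements merged into one kernel-verified Lean document; each statement's English description precedes it below -/
import Mathlib

section
/- For a ring R the following are equivalent: (i) R is a semi-regular 2-ΔU ring; (ii) R is an exchange 2-ΔU ring; (iii) R is a semi-tripotent ring, i.e., every a ∈ R can be written as a = e + j where e³ = e and j ∈ J(R). -/
/-- `Δ(R) = {r ∈ R : r + u is a unit for every unit u of R}`. -/
def Delta (R : Type*) [Ring R] : Set R := {r : R | ∀ u : Rˣ, IsUnit (r + (u : R))}

/-- A ring `R` is a 2-ΔU ring if every unit `u` satisfies `u ^ 2 - 1 ∈ Δ(R)`. -/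
def Is2DeltaU (R : Type*) [Ring R] : Prop := ∀ u : Rˣ, (u : R) ^ 2 - 1 ∈ Delta R

/-- `R` is semi-regular: `R/J(R)` is von Neumann regular and idempotents lift mod `J(R)`. -/
def IsSemiregular (R : Type*) [Ring R] : Prop :=
  (∀ a : R, ∃ x : R, a - a * x * a ∈ Ideal.jacobson (⊥ : Ideal R)) ∧
  (∀ a : R, a - a ^ 2 ∈ Ideal.jacobson (⊥ : Ideal R) →
    ∃ e : R, e * e = e ∧ a - e ∈ Ideal.jacobson (⊥ : Ideal R))

/-- `R` is an exchange ring. -/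
def IsExchange (R : Type*) [Ring R] : Prop :=
  ∀ a : R, ∃ e r s : R, e * e = e ∧ e = a * r ∧ 1 - e = (1 - a) * s

namespace TDU

variable {R : Type*} [Ring R]

local notation "𝕁" => Ideal.jacobson (⊥ : Ideal R)

lemma isUnit_of_left_right {x y z : R} (h1 : x*y = 1) (h2 : z*x = 1) : IsUnit x := by
  have hzy : z = y := by
    calc z = z * (x*y) := by rw [h1, mul_one]
    _ = (z*x)*y := by rw [mul_assoc]
    _ = y := by rw [h2, one_mul]
  exact ⟨⟨x, y, h1, by rw [← hzy]; exact h2⟩, rfl⟩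

lemma unit_swap {a b : R} (h : IsUnit (1 + a*b)) : IsUnit (1 + b*a) := by
  obtain ⟨u, hu⟩ := h
  have huv : (1 + a*b) * ↑u⁻¹ = 1 := by rw [← hu]; exact u.mul_inv
  have hvu : (↑u⁻¹ : R) * (1 + a*b) = 1 := by rw [← hu]; exact u.inv_mul
  apply isUnit_of_left_right (y := 1 - b * ↑u⁻¹ * a) (z := 1 - b * ↑u⁻¹ * a)
  · have : (1 + b*a) * (1 - b * ↑u⁻¹ * a) = 1 + b*a - b * ((1 + a*b) * ↑u⁻¹) * a := by noncomm_ring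
    rw [this, huv]; noncomm_ring
  · have : (1 - b * ↑u⁻¹ * a) * (1 + b*a) = 1 + b*a - b * (↑u⁻¹ * (1 + a*b)) * a := by noncomm_ring
    rw [this, hvu]; noncomm_ring

lemma mem_J_iff {x : R} : x ∈ 𝕁 ↔ ∀ y : R, IsUnit (1 + y*x) := by
  rw [Ideal.mem_jacobson_iff]
  constructor
  · intro h y
    obtain ⟨z, hz⟩ := h y
    rw [Ideal.mem_bot, sub_eq_zero] at hz
    have hz1 : z * (1 + y*x) = 1 := by rw [mul_add, mul_one, ← mul_assoc]; rw [add_comm]; exact hz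
    obtain ⟨w, hw⟩ := h (-(z*y))
    rw [Ideal.mem_bot, sub_eq_zero] at hw
    have hw1 : w * z = 1 := by
      have e1 : w*z - (w * -(z*y) * x + w) = w*(z*y*x + z - 1) := by noncomm_ring
      have e2 : w*(z*y*x + z - 1) = 0 := by rw [hz]; simp
      have e3 : w*z = w * -(z*y) * x + w := by
        have := e1.trans e2
        linear_combination (norm := noncomm_ring) this
      rw [e3]; exact hw
    have hzu : IsUnit z := isUnit_of_left_right hz1 hw1
    obtain ⟨v, hv⟩ := hzu
    have he : (1 + y*x) = ↑v⁻¹ := by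
      calc (1+y*x) = ↑v⁻¹ * (z * (1+y*x)) := by rw [← hv, ← mul_assoc, v.inv_mul, one_mul]
      _ = ↑v⁻¹ := by rw [hz1, mul_one]
    rw [he]; exact v⁻¹.isUnit
  · intro h y
    obtain ⟨u, hu⟩ := h y
    refine ⟨↑u⁻¹, ?_⟩
    rw [Ideal.mem_bot, sub_eq_zero]
    have h2 : (↑u⁻¹ : R) * (1 + y*x) = 1 := by rw [← hu]; exact u.inv_mul
    calc ↑u⁻¹ * y * x + ↑u⁻¹ = ↑u⁻¹ * (1 + y*x) := by noncomm_ring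
    _ = 1 := h2

lemma J_unit_left {x : R} (hx : x ∈ 𝕁) (y : R) : IsUnit (1 + y*x) := mem_J_iff.1 hx y

lemma J_unit_right {x : R} (hx : x ∈ 𝕁) (y : R) : IsUnit (1 + x*y) :=
  unit_swap (J_unit_left hx y)

lemma J_one_add {x : R} (hx : x ∈ 𝕁) : IsUnit (1 + x) := by
  simpa using J_unit_left hx 1

lemma J_mul_left {x : R} (hx : x ∈ 𝕁) (r : R) : r*x ∈ 𝕁 :=
  Ideal.mul_mem_left _ r hx

lemma J_mul_right {x : R} (hx : x ∈ 𝕁) (r : R) : x*r ∈ 𝕁 := by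
  rw [mem_J_iff]
  intro y
  have h1 : IsUnit (1 + (x*r)*y) := by rw [mul_assoc]; exact J_unit_right hx (r*y)
  exact unit_swap h1


def Jc (x y : R) : Prop := x - y ∈ 𝕁

lemma Jc.of_mem {x : R} (h : x ∈ 𝕁) : Jc x 0 := by simpa [Jc]
lemma Jc.mem {x : R} (h : Jc x 0) : x ∈ 𝕁 := by simpa [Jc] using h
lemma Jc.refl (x : R) : Jc x x := by simp [Jc]
lemma Jc.symm {x y : R} (h : Jc x y) : Jc y x := by
  have := neg_mem (h : x - y ∈ 𝕁)
  simpa [Jc, neg_sub] using this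
lemma Jc.trans {x y z : R} (h1 : Jc x y) (h2 : Jc y z) : Jc x z := by
  have := add_mem (h1 : x - y ∈ 𝕁) (h2 : y - z ∈ 𝕁)
  simpa [Jc, sub_add_sub_cancel] using this
lemma Jc.add {x y z w : R} (h1 : Jc x y) (h2 : Jc z w) : Jc (x+z) (y+w) := by
  have := add_mem (h1 : x - y ∈ 𝕁) (h2 : z - w ∈ 𝕁)
  simpa [Jc, sub_add_sub_comm] using this
lemma Jc.neg {x y : R} (h : Jc x y) : Jc (-x) (-y) := by
  have := neg_mem (h : x - y ∈ 𝕁)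
  have e : -(x - y) = -x - -y := by abel
  rw [e] at this; exact this
lemma Jc.sub {x y z w : R} (h1 : Jc x y) (h2 : Jc z w) : Jc (x-z) (y-w) := by
  have := sub_mem (h1 : x - y ∈ 𝕁) (h2 : z - w ∈ 𝕁)
  have e : x - y - (z - w) = (x - z) - (y - w) := by abel
  rw [e] at this; exact this
lemma Jc.mul {x y z w : R} (h1 : Jc x y) (h2 : Jc z w) : Jc (x*z) (y*w) := by
  have hA : x*(z-w) ∈ 𝕁 := J_mul_left h2 x
  have hB : (x-y)*w ∈ 𝕁 := J_mul_right h1 w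
  have := add_mem hA hB
  have e : x*(z-w) + (x-y)*w = x*z - y*w := by noncomm_ring
  rw [e] at this; exact this
lemma Jc.mul_left {x y : R} (r : R) (h : Jc x y) : Jc (r*x) (r*y) := (Jc.refl r).mul h
lemma Jc.mul_right {x y : R} (r : R) (h : Jc x y) : Jc (x*r) (y*r) := h.mul (Jc.refl r)
lemma Jc.of_eq {x y : R} (h : x = y) : Jc x y := h ▸ Jc.refl x

lemma Jc.isUnit {x y : R} (h : Jc x y) (hy : IsUnit y) : IsUnit x := by
  obtain ⟨u, hu⟩ := hy
  have h2 : x = (↑u) * (1 + ↑u⁻¹ * (x - y)) := by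
    rw [mul_add, mul_one, ← mul_assoc, u.mul_inv, one_mul, hu]; abel
  rw [h2]
  exact u.isUnit.mul (J_one_add (J_mul_left h ↑u⁻¹))

lemma isUnit_of_Jc_one {x y : R} (h1 : Jc (x*y) 1) (h2 : Jc (y*x) 1) : IsUnit x := by
  have hu1 : IsUnit (x*y) := h1.isUnit isUnit_one
  have hu2 : IsUnit (y*x) := h2.isUnit isUnit_one
  obtain ⟨u, hu⟩ := hu1
  obtain ⟨v, hv⟩ := hu2
  have e1 : x * (y * ↑u⁻¹) = 1 := by rw [← mul_assoc, ← hu]; exact u.mul_inv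
  have e2 : (↑v⁻¹ * y) * x = 1 := by rw [mul_assoc, ← hv]; exact v.inv_mul
  exact isUnit_of_left_right e1 e2

lemma isUnit_neg_iff {x : R} : IsUnit (-x) ↔ IsUnit x :=
  ⟨fun h => by simpa using h.neg, IsUnit.neg⟩

lemma idem_unit_eq_one {e : R} (he : e*e = e) (hu : IsUnit e) : e = 1 := by
  obtain ⟨u, hu'⟩ := hu
  have h1 : e * ↑u⁻¹ = 1 := by rw [← hu']; exact u.mul_inv
  calc e = e * 1 := by rw [mul_one]
  _ = e * (e * ↑u⁻¹) := by rw [h1]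
  _ = (e*e) * ↑u⁻¹ := by rw [mul_assoc]
  _ = e * ↑u⁻¹ := by rw [he]
  _ = 1 := h1

def LIFT (R : Type*) [Ring R] : Prop :=
  ∀ a : R, a - a*a ∈ Ideal.jacobson (⊥ : Ideal R) →
    ∃ e : R, e*e = e ∧ a - e ∈ Ideal.jacobson (⊥ : Ideal R)

def IsSemiregular (R : Type*) [Ring R] : Prop :=
  (∀ a : R, ∃ x : R, a - a * x * a ∈ Ideal.jacobson (⊥ : Ideal R)) ∧
  (∀ a : R, a - a ^ 2 ∈ Ideal.jacobson (⊥ : Ideal R) →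
    ∃ e : R, e * e = e ∧ a - e ∈ Ideal.jacobson (⊥ : Ideal R))

def IsExchange (R : Type*) [Ring R] : Prop :=
  ∀ a : R, ∃ e r s : R, e * e = e ∧ e = a * r ∧ 1 - e = (1 - a) * s

lemma lift_of_sr (h : IsSemiregular R) : LIFT R := by
  intro a ha
  exact h.2 a (by rw [pow_two]; exact ha)

lemma lift_of_ex (h : IsExchange R) : LIFT R := by
  intro a ha
  obtain ⟨e, r, s, he, h1, h2⟩ := h a
  refine ⟨e, he, ?_⟩
  have hA : a*e - e ∈ 𝕁 := by
    have e1 : a*e - e = (a - a*a)*(-r) := by rw [h1]; noncomm_ring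
    rw [e1]; exact J_mul_right ha _
  have hB : a*(1-e) ∈ 𝕁 := by
    have e1 : a*(1-e) = (a - a*a)*s := by
      rw [show (1:R) - e = (1-a)*s from h2]; noncomm_ring
    rw [e1]; exact J_mul_right ha _
  have e2 : a - e = a*(1-e) + (a*e - e) := by noncomm_ring
  rw [e2]; exact add_mem hB hA

/-- exchange rings: non-unit 1-a yields an idempotent outside J inside aR -/
lemma ex_idem (hex : IsExchange R) {a : R} (hna : ¬ IsUnit (1-a)) :
    ∃ h c : R, h*h = h ∧ h ∉ 𝕁 ∧ h = a*c := by
  obtain ⟨e, r, s, he, h1, h2⟩ := hex a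
  by_cases hej : e ∈ 𝕁
  · have hu : IsUnit (1-e) := by
      have : Jc (1-e) 1 := by
        have : (1-e) - 1 = -e := by abel
        rw [Jc, this]; exact neg_mem hej
      exact this.isUnit isUnit_one
    obtain ⟨w, hw⟩ := hu
    have hrs : (1-a) * (s * ↑w⁻¹) = 1 := by
      rw [← mul_assoc, ← h2, ← hw]; exact w.mul_inv
    set s' := s * ↑w⁻¹ with hs'
    set g := s' * (1-a) with hgdef
    have hg : g*g = g := by
      rw [hgdef]
      calc s' * (1-a) * (s' * (1-a)) = s' * ((1-a) * s') * (1-a) := by noncomm_ring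
      _ = s' * (1-a) := by rw [hrs, mul_one]
    by_cases hgj : (1:R) - g ∈ 𝕁
    · exfalso
      have hgu : IsUnit g := by
        have : Jc g 1 := by
          have e3 : g - 1 = -(1-g) := by abel
          rw [Jc, e3]; exact neg_mem hgj
        exact this.isUnit isUnit_one
      have hg1 : g = 1 := idem_unit_eq_one hg hgu
      exact hna (isUnit_of_left_right hrs (by rw [← hgdef, hg1]))
    · have hzero : (1-a) * (1-g) = 0 := by
        calc (1-a) * (1-g) = (1-a) - ((1-a) * s') * (1-a) := by rw [hgdef]; noncomm_ring
        _ = 0 := by rw [hrs, one_mul, sub_self]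
      have hag : 1 - g = a * (1-g) := by
        have : (1-g) - a*(1-g) = (1-a)*(1-g) := by noncomm_ring
        have h0 := this.trans hzero
        calc 1 - g = (1-g) - a*(1-g) + a*(1-g) := by abel
        _ = a * (1-g) := by rw [h0, zero_add]
      have hh : (1-g)*(1-g) = 1 - g := by
        calc (1-g)*(1-g) = 1 - g - g + g*g := by noncomm_ring
        _ = 1 - g := by rw [hg]; abel
      exact ⟨1-g, 1-g, hh, hgj, hag⟩
  · exact ⟨e, r, he, hej, h1⟩

/-- abelian mod J, given reducedness mod J -/
lemma abelian_of_red (hred : ∀ x : R, x*x ∈ 𝕁 → x ∈ 𝕁) {e : R} (he : e*e = e) (r : R) :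
    e*r - r*e ∈ 𝕁 := by
  have hn1 : e*r*(1-e) ∈ 𝕁 := by
    apply hred
    have : (e*r*(1-e)) * (e*r*(1-e)) = e*r*((1-e)*e)*r*(1-e) := by noncomm_ring
    rw [this, show (1-e)*e = e - e*e by noncomm_ring, he, sub_self]
    simp
  have hn2 : (1-e)*r*e ∈ 𝕁 := by
    apply hred
    have : ((1-e)*r*e) * ((1-e)*r*e) = (1-e)*r*(e*(1-e))*r*e := by noncomm_ring
    rw [this, show e*(1-e) = e - e*e by noncomm_ring, he, sub_self]
    simp
  have e1 : e*r - r*e = e*r*(1-e) - (1-e)*r*e := by noncomm_ring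
  rw [e1]; exact sub_mem hn1 hn2

/-- Dedekind finiteness mod J -/
lemma df_of (hl : LIFT R) (hred : ∀ x : R, x*x ∈ 𝕁 → x ∈ 𝕁) {x y : R}
    (hxy : x*y - 1 ∈ 𝕁) : y*x - 1 ∈ 𝕁 := by
  have he2 : (y*x) - (y*x)*(y*x) ∈ 𝕁 := by
    have e1 : (y*x) - (y*x)*(y*x) = -(y*((x*y - 1))*x) := by noncomm_ring
    rw [e1]; exact neg_mem (J_mul_right (J_mul_left hxy y) x)
  obtain ⟨g, hg, hge⟩ := hl (y*x) he2
  -- hge : y*x - g ∈ 𝕁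
  have hxg : x*g - x ∈ 𝕁 := by
    have c1 : Jc (x*g) (x*(y*x)) := Jc.mul_left x (Jc.symm hge)
    have c2 : Jc (x*(y*x)) x := by
      have e1 : x*(y*x) - x = (x*y - 1)*x := by noncomm_ring
      rw [Jc, e1]; exact J_mul_right hxy x
    exact c1.trans c2
  have h1g : (1-g)*x ∈ 𝕁 := by
    have hab := abelian_of_red hred hg x
    have e1 : (1-g)*x = -(x*g - x) - (g*x - x*g) := by noncomm_ring
    rw [e1]
    exact sub_mem (neg_mem hxg) hab
  have h2 : (1:R) - g ∈ 𝕁 := by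
    have c1 : (1-g)*(x*y) ∈ 𝕁 := by
      have e1 : (1-g)*(x*y) = ((1-g)*x)*y := by noncomm_ring
      rw [e1]; exact J_mul_right h1g y
    have c2 : (1-g) - (1-g)*(x*y) = (1-g)*(-(x*y - 1)) := by noncomm_ring
    have : (1-g) - (1-g)*(x*y) ∈ 𝕁 := by rw [c2]; exact J_mul_left (neg_mem hxy) _
    have := add_mem this c1
    rw [sub_add_cancel] at this; exact this
  have e1 : y*x - 1 = (y*x - g) - (1 - g) := by abel
  rw [e1]; exact sub_mem hge h2


/-- The key 2-ΔU obstruction: a regular square-zero element mod J must lie in J. -/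
lemma matrix_lemma (h2 : Is2DeltaU R) (hl : LIFT R) {m x : R}
    (hm2 : m*m ∈ 𝕁) (hreg : m - m*x*m ∈ 𝕁) : m ∈ 𝕁 := by
  set e := m*x with hedef
  set f0 := x*m with hf0def
  set f := (1-e)*f0 with hfdef
  set mt := f*x*e with hmtdef
  set p := e + f with hpdef
  set s := m + mt with hsdef
  -- basic congruences
  have A1 : Jc (e*m) m := by
    have : e*m - m = -(m - m*x*m) := by rw [hedef]; noncomm_ring
    rw [Jc, this]; exact neg_mem hreg
  have A2 : Jc (m*f0) m := by
    have : m*f0 - m = -(m - m*x*m) := by rw [hf0def]; noncomm_ring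
    rw [Jc, this]; exact neg_mem hreg
  have A3 : Jc (m*e) 0 := by
    have : m*e - 0 = (m*m)*x := by rw [hedef]; noncomm_ring
    rw [Jc, this]; exact J_mul_right hm2 x
  have A4 : Jc (f0*m) 0 := by
    have : f0*m - 0 = x*(m*m) := by rw [hf0def]; noncomm_ring
    rw [Jc, this]; exact J_mul_left hm2 x
  have A5 : Jc (e*e) e := by
    have : e*e - e = -((m - m*x*m)*x) := by rw [hedef]; noncomm_ring
    rw [Jc, this]; exact neg_mem (J_mul_right hreg x)
  have A6 : Jc (f0*f0) f0 := by
    have : f0*f0 - f0 = -(x*(m - m*x*m)) := by rw [hf0def]; noncomm_ring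
    rw [Jc, this]; exact neg_mem (J_mul_left hreg x)
  have A7 : Jc (f0*e) 0 := by
    have : f0*e - 0 = x*(m*m)*x := by rw [hf0def, hedef]; noncomm_ring
    rw [Jc, this]; exact J_mul_right (J_mul_left hm2 x) x
  have A8 : Jc (f*f) f := by
    have hid : f*f - f = (1-e)*(f0*f0 - f0) - (1-e)*((f0*e - 0)*f0) := by
      rw [hfdef]; noncomm_ring
    rw [Jc, hid]
    exact sub_mem (J_mul_left (A6 : f0*f0 - f0 ∈ 𝕁) _)
      (J_mul_left (J_mul_right (A7 : f0*e - 0 ∈ 𝕁) f0) _)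
  have A9 : Jc (e*f) 0 := by
    have hid : e*f - 0 = ((e*e - e)*(-1))*f0 := by rw [hfdef]; noncomm_ring
    rw [Jc, hid]
    exact J_mul_right (J_mul_right (A5 : e*e - e ∈ 𝕁) _) _
  have A10 : Jc (f*e) 0 := by
    have hid : f*e - 0 = (1-e)*(f0*e - 0) := by rw [hfdef]; noncomm_ring
    rw [Jc, hid]; exact J_mul_left (A7 : f0*e - 0 ∈ 𝕁) _
  have A11 : Jc (m*f) m := by
    have hid : m*f - m = (m*f0 - m) - (m*e - 0)*f0 := by rw [hfdef]; noncomm_ring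
    rw [Jc, hid]
    exact sub_mem (A2 : m*f0 - m ∈ 𝕁) (J_mul_right (A3 : m*e - 0 ∈ 𝕁) f0)
  have A12 : Jc (f*m) 0 := by
    have hid : f*m - 0 = (1-e)*(f0*m - 0) := by rw [hfdef]; noncomm_ring
    rw [Jc, hid]; exact J_mul_left (A4 : f0*m - 0 ∈ 𝕁) _
  -- mt congruences
  have B1 : Jc (mt*m) f := by
    have c1 : Jc (mt*m) (f*x*m) := by
      have hid : mt*m - f*x*m = (f*x)*(e*m - m) := by rw [hmtdef]; noncomm_ring
      rw [Jc, hid]; exact J_mul_left (A1 : e*m - m ∈ 𝕁) _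
    have c2 : Jc (f*x*m) f := by
      have hid : f*x*m - f = (1-e)*(f0*f0 - f0) := by rw [hfdef, hf0def]; noncomm_ring
      rw [Jc, hid]; exact J_mul_left (A6 : f0*f0 - f0 ∈ 𝕁) _
    exact c1.trans c2
  have B2 : Jc (m*mt) e := by
    have c1 : Jc (m*mt) (m*(x*e)) := by
      have hid : m*mt - m*(x*e) = (m*f - m)*(x*e) := by rw [hmtdef]; noncomm_ring
      rw [Jc, hid]; exact J_mul_right (A11 : m*f - m ∈ 𝕁) _
    have c2 : Jc (m*(x*e)) e := by
      have hid : m*(x*e) - e = e*e - e := by rw [hedef]; noncomm_ring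
      rw [Jc, hid]; exact (A5 : e*e - e ∈ 𝕁)
    exact c1.trans c2
  have B3 : Jc (mt*mt) 0 := by
    have hid : mt*mt - 0 = (f*x)*((e*f - 0)*(x*e)) := by rw [hmtdef]; noncomm_ring
    rw [Jc, hid]; exact J_mul_left (J_mul_right (A9 : e*f - 0 ∈ 𝕁) _) _
  have B4 : Jc (e*mt) 0 := by
    have hid : e*mt - 0 = (e*f - 0)*(x*e) := by rw [hmtdef]; noncomm_ring
    rw [Jc, hid]; exact J_mul_right (A9 : e*f - 0 ∈ 𝕁) _
  have B5 : Jc (mt*e) mt := by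
    have hid : mt*e - mt = (f*x)*(e*e - e) := by rw [hmtdef]; noncomm_ring
    rw [Jc, hid]; exact J_mul_left (A5 : e*e - e ∈ 𝕁) _
  have B6 : Jc (f*mt) mt := by
    have hid : f*mt - mt = (f*f - f)*(x*e) := by rw [hmtdef]; noncomm_ring
    rw [Jc, hid]; exact J_mul_right (A8 : f*f - f ∈ 𝕁) _
  have B7 : Jc (mt*f) 0 := by
    have hid : mt*f - 0 = (f*x)*((e*f - 0)) := by rw [hmtdef]; noncomm_ring
    rw [Jc, hid]; exact J_mul_left (A9 : e*f - 0 ∈ 𝕁) _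
  -- p congruences
  have C1 : Jc (p*p) p := by
    have hid : p*p - p = (e*e - e) + (e*f - 0) + (f*e - 0) + (f*f - f) := by
      rw [hpdef]; noncomm_ring
    rw [Jc, hid]
    exact add_mem (add_mem (add_mem (A5 : e*e - e ∈ 𝕁) (A9 : e*f - 0 ∈ 𝕁))
      (A10 : f*e - 0 ∈ 𝕁)) (A8 : f*f - f ∈ 𝕁)
  have C2 : Jc (p*m) m := by
    have hid : p*m - m = (e*m - m) + (f*m - 0) := by rw [hpdef]; noncomm_ring
    rw [Jc, hid]; exact add_mem (A1 : e*m - m ∈ 𝕁) (A12 : f*m - 0 ∈ 𝕁)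
  have C3 : Jc (m*p) m := by
    have hid : m*p - m = (m*e - 0) + (m*f - m) := by rw [hpdef]; noncomm_ring
    rw [Jc, hid]; exact add_mem (A3 : m*e - 0 ∈ 𝕁) (A11 : m*f - m ∈ 𝕁)
  have C4 : Jc (mt*p) mt := by
    have hid : mt*p - mt = (mt*e - mt) + (mt*f - 0) := by rw [hpdef]; noncomm_ring
    rw [Jc, hid]; exact add_mem (B5 : mt*e - mt ∈ 𝕁) (B7 : mt*f - 0 ∈ 𝕁)
  have C5 : Jc (p*mt) mt := by
    have hid : p*mt - mt = (e*mt - 0) + (f*mt - mt) := by rw [hpdef]; noncomm_ring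
    rw [Jc, hid]; exact add_mem (B4 : e*mt - 0 ∈ 𝕁) (B6 : f*mt - mt ∈ 𝕁)
  have C6 : Jc (p*e) e := by
    have hid : p*e - e = (e*e - e) + (f*e - 0) := by rw [hpdef]; noncomm_ring
    rw [Jc, hid]; exact add_mem (A5 : e*e - e ∈ 𝕁) (A10 : f*e - 0 ∈ 𝕁)
  -- s congruences
  have D1 : Jc (s*s) p := by
    have hid : s*s - p = (m*m - 0) + (m*mt - e) + (mt*m - f) + (mt*mt - 0) := by
      rw [hsdef, hpdef]; noncomm_ring
    rw [Jc, hid]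
    refine add_mem (add_mem (add_mem ?_ (B2 : m*mt - e ∈ 𝕁)) (B1 : mt*m - f ∈ 𝕁))
      (B3 : mt*mt - 0 ∈ 𝕁)
    simpa using hm2
  have D2 : Jc (p*s) s := by
    have hid : p*s - s = (p*m - m) + (p*mt - mt) := by rw [hsdef]; noncomm_ring
    rw [Jc, hid]; exact add_mem (C2 : p*m - m ∈ 𝕁) (C5 : p*mt - mt ∈ 𝕁)
  have D3 : Jc (s*p) s := by
    have hid : s*p - s = (m*p - m) + (mt*p - mt) := by rw [hsdef]; noncomm_ring
    rw [Jc, hid]; exact add_mem (C3 : m*p - m ∈ 𝕁) (C4 : mt*p - mt ∈ 𝕁)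
  -- u is a unit
  set u := 1 - p + s with hudef
  have E1 : Jc (u*u) 1 := by
    have hid : u*u - 1 = (p*p - p) + (s*s - p) + (s - p*s) + (s - s*p) := by
      rw [hudef]; noncomm_ring
    rw [Jc, hid]
    refine add_mem (add_mem (add_mem (C1 : p*p - p ∈ 𝕁) (D1 : s*s - p ∈ 𝕁)) ?_) ?_
    · have := neg_mem (D2 : p*s - s ∈ 𝕁); rw [neg_sub] at this; exact this
    · have := neg_mem (D3 : s*p - s ∈ 𝕁); rw [neg_sub] at this; exact this
  have E2 : IsUnit u := isUnit_of_Jc_one E1 E1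
  -- w := u * (1+m) is a unit
  have F1 : IsUnit (1 + m) := by
    have c : Jc ((1+m)*(1-m)) 1 := by
      have hid : (1+m)*(1-m) - 1 = -(m*m) := by noncomm_ring
      rw [Jc, hid]; exact neg_mem hm2
    have c' : Jc ((1-m)*(1+m)) 1 := by
      have hid : (1-m)*(1+m) - 1 = -(m*m) := by noncomm_ring
      rw [Jc, hid]; exact neg_mem hm2
    exact isUnit_of_Jc_one c c'
  set w := u * (1 + m) with hwdef
  have F2 : IsUnit w := E2.mul F1
  -- w ≈ 1 - e + m + mt
  have F3 : Jc (u*m) f := by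
    have hid : u*m - f = -(p*m - m) + (m*m - 0) + (mt*m - f) := by
      rw [hudef, hsdef]; noncomm_ring
    rw [Jc, hid]
    refine add_mem (add_mem (neg_mem (C2 : p*m - m ∈ 𝕁)) ?_) (B1 : mt*m - f ∈ 𝕁)
    simpa using hm2
  set C0 := 1 - e + m + mt with hC0def
  have F4 : Jc w C0 := by
    have hid : w - C0 = u*m - f := by rw [hwdef, hC0def, hudef, hsdef, hpdef]; noncomm_ring
    rw [Jc, hid]; exact (F3 : u*m - f ∈ 𝕁)
  -- C0 is a unit, so -C0 is a unit
  have F5 : IsUnit C0 := (F4.symm).isUnit F2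
  -- w*w ≈ 1 + f + m + mt
  have G1 : Jc (C0*C0) (1 + f + m + mt) := by
    have hid : C0*C0 - (1 + f + m + mt) =
        (e*e - e) + (-(e*m - m)) + (-(e*mt - 0)) + (-(m*e - 0)) + (m*m - 0)
        + (m*mt - e) + (-(mt*e - mt)) + (mt*m - f) + (mt*mt - 0) := by
      rw [hC0def]; noncomm_ring
    rw [Jc, hid]
    refine add_mem (add_mem (add_mem (add_mem (add_mem (add_mem (add_mem (add_mem
      (A5 : e*e - e ∈ 𝕁)
      (neg_mem (A1 : e*m - m ∈ 𝕁)))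
      (neg_mem (B4 : e*mt - 0 ∈ 𝕁)))
      (neg_mem (A3 : m*e - 0 ∈ 𝕁)))
      (by simpa using hm2))
      (B2 : m*mt - e ∈ 𝕁))
      (neg_mem (B5 : mt*e - mt ∈ 𝕁)))
      (B1 : mt*m - f ∈ 𝕁))
      (B3 : mt*mt - 0 ∈ 𝕁)
  have G2 : Jc (w*w) (1 + f + m + mt) := (F4.mul F4).trans G1
  -- the 2-ΔU contradiction
  obtain ⟨wu, hwu⟩ := F2
  obtain ⟨vu, hvu⟩ := F5.neg
  have hdel : (w : R)^2 - 1 ∈ Delta R := by rw [← hwu]; exact h2 wu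
  have hV : IsUnit (w^2 - 1 + ↑vu) := hdel vu
  have hV' : IsUnit (w*w - 1 + -C0) := by rw [hvu] at hV; rw [← pow_two]; exact hV
  have G3 : Jc (w*w - 1 + -C0) (-(1 - p)) := by
    have c1 : Jc (w*w - 1 + -C0) ((1 + f + m + mt) - 1 + -C0) :=
      (G2.sub (Jc.refl 1)).add (Jc.refl (-C0))
    have c2 : (1 + f + m + mt) - 1 + -C0 = -(1 - p) := by
      rw [hC0def, hpdef]; abel
    rw [c2] at c1; exact c1
  have hUnp : IsUnit (1 - p) := by
    have := (G3.symm).isUnit hV'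
    exact isUnit_neg_iff.1 this
  -- lift p to an exact idempotent and conclude p ∈ J
  have hplift : p - p*p ∈ 𝕁 := by
    have := neg_mem (C1 : p*p - p ∈ 𝕁); rw [neg_sub] at this; exact this
  obtain ⟨p', hp', hpp'⟩ := hl p hplift
  have hU' : IsUnit (1 - p') := by
    have c : Jc (1 - p') (1 - p) := (Jc.refl 1).sub (Jc.symm (hpp' : p - p' ∈ 𝕁))
    exact c.isUnit hUnp
  have hone : (1:R) - p' = 1 := by
    apply idem_unit_eq_one _ hU'
    calc (1-p')*(1-p') = 1 - p' - p' + p'*p' := by noncomm_ring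
    _ = 1 - p' := by rw [hp']; abel
  have hpJ : p ∈ 𝕁 := by
    have hp'0 : p' = 0 := by
      have : p' = 1 - (1 - p') := by abel
      rw [this, hone, sub_self]
    have := (hpp' : p - p' ∈ 𝕁)
    rwa [hp'0, sub_zero] at this
  have heJ : e ∈ 𝕁 := by
    have c1 : p*e ∈ 𝕁 := J_mul_right hpJ e
    have := add_mem (neg_mem (C6 : p*e - e ∈ 𝕁)) c1
    have e1 : -(p*e - e) + p*e = e := by abel
    rwa [e1] at this
  have : e*m ∈ 𝕁 := J_mul_right heJ m
  have := add_mem (neg_mem (A1 : e*m - m ∈ 𝕁)) this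
  have e1 : -(e*m - m) + e*m = m := by abel
  rwa [e1] at this


lemma red_of_sr (h2 : Is2DeltaU R) (hsr : IsSemiregular R) :
    ∀ m : R, m*m ∈ 𝕁 → m ∈ 𝕁 := by
  intro m hm2
  obtain ⟨y, hy⟩ := hsr.1 m
  exact matrix_lemma h2 (lift_of_sr hsr) hm2 hy

lemma red_of_ex (h2 : Is2DeltaU R) (hex : IsExchange R) :
    ∀ m : R, m*m ∈ 𝕁 → m ∈ 𝕁 := by
  intro n hn2
  by_contra hnj
  obtain ⟨y, hy⟩ : ∃ y : R, ¬ IsUnit (1 + y*n) := by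
    by_contra hall
    push_neg at hall
    exact hnj (mem_J_iff.2 hall)
  have hy' : ¬ IsUnit (1 - (-(n*y))) := by
    intro hcon
    rw [sub_neg_eq_add] at hcon
    exact hy (unit_swap hcon)
  obtain ⟨h, c, hh, hhj, hhc⟩ := ex_idem hex hy'
  set c' := -(y*c) with hc'def
  have hhc' : h = n * c' := by rw [hhc, hc'def]; noncomm_ring
  set m := h * n with hmdef
  have hmm : m*m ∈ 𝕁 := by
    have e1 : m*m = h*((n*n)*(c'*n)) := by rw [hmdef, hhc']; noncomm_ring
    rw [e1]; exact J_mul_left (J_mul_right hn2 _) h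
  have hreg : m - m*c'*m ∈ 𝕁 := by
    have e1 : m*c'*m = m := by
      rw [hmdef]
      calc h*n*c'*(h*n) = h*(n*c')*h*n := by noncomm_ring
      _ = h*n := by rw [← hhc', hh, hh]
    rw [e1, sub_self]; exact zero_mem _
  have hmJ : m ∈ 𝕁 := matrix_lemma h2 (lift_of_ex hex) hmm hreg
  -- then h = m * c' ∈ J, contradiction
  have hhJ : h ∈ 𝕁 := by
    have e1 : h = m*c' := by
      rw [hmdef]
      calc h = h*h := (hh).symm
      _ = h*(n*c') := by rw [← hhc']
      _ = h*n*c' := by rw [mul_assoc]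
    rw [e1]; exact J_mul_right hmJ c'
  exact hhj hhJ

lemma half_of_sr (hsr : IsSemiregular R) {d : R} (hdj : d ∉ 𝕁) :
    ∃ h c : R, h*h = h ∧ h ∉ 𝕁 ∧ h - d*c ∈ 𝕁 := by
  obtain ⟨y, hy⟩ := hsr.1 d
  have hidem : (d*y) - (d*y)*(d*y) ∈ 𝕁 := by
    have e1 : (d*y) - (d*y)*(d*y) = (d - d*y*d)*y := by noncomm_ring
    rw [e1]; exact J_mul_right hy y
  obtain ⟨h, hh, hge⟩ := lift_of_sr hsr (d*y) hidem
  refine ⟨h, y, hh, ?_, ?_⟩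
  · intro hJ
    -- then d*y ∈ J hence d*y*d ∈ J hence d ∈ J
    have h1 : d*y ∈ 𝕁 := by
      have := add_mem (hge : d*y - h ∈ 𝕁) hJ
      rwa [sub_add_cancel] at this
    have h2 : d*y*d ∈ 𝕁 := J_mul_right h1 d
    have := add_mem hy h2
    rw [sub_add_cancel] at this
    exact hdj this
  · have := neg_mem (hge : d*y - h ∈ 𝕁)
    rw [neg_sub] at this; exact this

lemma half_of_ex (hex : IsExchange R) {d : R} (hdj : d ∉ 𝕁) :
    ∃ h c : R, h*h = h ∧ h ∉ 𝕁 ∧ h - d*c ∈ 𝕁 := by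
  obtain ⟨y, hy⟩ : ∃ y : R, ¬ IsUnit (1 + y*d) := by
    by_contra hall
    push_neg at hall
    exact hdj (mem_J_iff.2 hall)
  have hy' : ¬ IsUnit (1 - (-(d*y))) := by
    intro hcon
    rw [sub_neg_eq_add] at hcon
    exact hy (unit_swap hcon)
  obtain ⟨h, c, hh, hhj, hhc⟩ := ex_idem hex hy'
  refine ⟨h, -(y*c), hh, hhj, ?_⟩
  have e1 : h - d*(-(y*c)) = 0 := by rw [hhc]; noncomm_ring
  rw [e1]; exact zero_mem _

/-- Δ(R) ⊆ J -/
lemma delta_sub_J (hl : LIFT R) (hred : ∀ m : R, m*m ∈ 𝕁 → m ∈ 𝕁)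
    (hhalf : ∀ d : R, d ∉ 𝕁 → ∃ h c : R, h*h = h ∧ h ∉ 𝕁 ∧ h - d*c ∈ 𝕁) :
    ∀ d ∈ Delta R, d ∈ 𝕁 := by
  intro d hd
  by_contra hdj
  obtain ⟨h, c, hh, hhj, hdc⟩ := hhalf d hdj
  have hz : h*h - h = 0 := by rw [hh, sub_self]
  have hab := fun r => abelian_of_red hred hh r
  have habd : d*h - h*d ∈ 𝕁 := by
    have := neg_mem (hab d); rwa [neg_sub] at this
  set X := h*d + (1 - h) with hXdef
  set Y := h*c + (1 - h) with hYdef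
  have hXY : X*Y - 1 ∈ 𝕁 := by
    have hhd : Jc (h*d*(h*c)) h := by
      have c1 : Jc (h*d*(h*c)) (h*h*(d*c)) := by
        have e1 : h*d*(h*c) - h*h*(d*c) = h*((d*h - h*d)*c) := by noncomm_ring
        rw [Jc, e1]; exact J_mul_left (J_mul_right habd c) h
      have c2 : Jc (h*h*(d*c)) h := by
        rw [hh]
        have c3 : Jc (h*(d*c)) (h*h) := Jc.mul_left h (Jc.symm (hdc : h - d*c ∈ 𝕁))
        rw [hh] at c3; exact c3
      exact c1.trans c2
    have hcross1 : h*d*(1-h) ∈ 𝕁 := by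
      have e1 : h*d*(1-h) = -(h*(d*h - h*d)) - (h*h - h)*d := by noncomm_ring
      rw [e1, hz, zero_mul, sub_zero]
      exact neg_mem (J_mul_left habd h)
    have hcross2 : (1-h)*(h*c) = 0 := by
      have e1 : (1-h)*(h*c) = -((h*h - h)*c) := by noncomm_ring
      rw [e1, hz, zero_mul, neg_zero]
    have e2 : X*Y - 1 = (h*d*(h*c) - h) + h*d*(1-h) + (1-h)*(h*c)
        + ((1-h)*(1-h) - (1-h)) := by rw [hXdef, hYdef]; noncomm_ring
    have e3 : (1-h)*(1-h) - (1-h) = h*h - h := by noncomm_ring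
    rw [e2, e3, hz, hcross2]
    simpa using add_mem (add_mem (hhd : h*d*(h*c) - h ∈ 𝕁) hcross1) (zero_mem 𝕁)
  have hYX : Y*X - 1 ∈ 𝕁 := df_of hl hred hXY
  have hXu : IsUnit X := isUnit_of_Jc_one (hXY : Jc (X*Y) 1) (hYX : Jc (Y*X) 1)
  obtain ⟨vu, hvu⟩ := hXu.neg
  have hres : IsUnit (d + ↑vu) := hd vu
  rw [hvu] at hres
  have e4 : d + -X = (1-h)*(d-1) := by rw [hXdef]; noncomm_ring
  rw [e4] at hres
  obtain ⟨q, hq⟩ := hres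
  have hcontr : h = 0 := by
    have e5 : h * ((1-h)*(d-1)) = -((h*h - h)*(d-1)) := by noncomm_ring
    have e6 : h * ((1-h)*(d-1)) = 0 := by rw [e5, hz, zero_mul, neg_zero]
    calc h = h * (↑q * ↑q⁻¹) := by rw [q.mul_inv, mul_one]
    _ = (h * ↑q) * ↑q⁻¹ := by rw [← mul_assoc]
    _ = (h * ((1-h)*(d-1))) * ↑q⁻¹ := by rw [hq]
    _ = 0 := by rw [e6, zero_mul]
  exact hhj (by rw [hcontr]; exact zero_mem _)

/-- all units square to 1 mod J -/
lemma usq_of (h2 : Is2DeltaU R) (hds : ∀ d ∈ Delta R, d ∈ 𝕁) {v : R} (hv : IsUnit v) :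
    v*v - 1 ∈ 𝕁 := by
  obtain ⟨u, hu⟩ := hv
  have := hds _ (h2 u)
  rw [hu, pow_two] at this
  exact this


lemma cube_of_sr (h2 : Is2DeltaU R) (hsr : IsSemiregular R) : ∀ a : R, a*a*a - a ∈ 𝕁 := by
  have hl := lift_of_sr hsr
  have hred := red_of_sr h2 hsr
  have hds := delta_sub_J hl hred (fun d hd => half_of_sr hsr hd)
  intro a
  obtain ⟨y₀, hy₀⟩ := hsr.1 a
  set y := y₀*a*y₀ with hydef
  have haya : a - a*y*a ∈ 𝕁 := by
    have e1 : a - a*y*a = (a - a*y₀*a) - (-(a - a*y₀*a))*(y₀*a) := by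
      rw [hydef]; noncomm_ring
    rw [e1]
    exact sub_mem hy₀ (J_mul_right (neg_mem hy₀) _)
  have hidem : a*y - (a*y)*(a*y) ∈ 𝕁 := by
    have e1 : a*y - (a*y)*(a*y) = (a - a*y*a)*y := by noncomm_ring
    rw [e1]; exact J_mul_right haya y
  obtain ⟨g, hg, hge⟩ := hl (a*y) hidem
  have hz : g*g - g = 0 := by rw [hg, sub_self]
  have hab := fun r => abelian_of_red hred hg r
  have hga : g*a - a ∈ 𝕁 := by
    have e1 : g*a - a = (-(a*y - g))*a + (-(a - a*y*a)) := by noncomm_ring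
    rw [e1]
    exact add_mem (J_mul_right (neg_mem hge) a) (neg_mem haya)
  have hag : a*g - a ∈ 𝕁 := by
    have e1 : a*g - a = (-(g*a - a*g)) + (g*a - a) := by abel
    rw [e1]
    exact add_mem (neg_mem (hab a)) hga
  set X := a + (1 - g) with hXdef
  set Y := y*g + (1 - g) with hYdef
  have hXY : X*Y - 1 ∈ 𝕁 := by
    have t1 : a*(y*g) - g ∈ 𝕁 := by
      have e1 : a*(y*g) - g = ((a*y) - g)*g + (g*g - g) := by noncomm_ring
      rw [e1, hz, add_zero]
      exact J_mul_right hge g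
    have t2 : a*(1-g) ∈ 𝕁 := by
      have e1 : a*(1-g) = -(a*g - a) := by noncomm_ring
      rw [e1]; exact neg_mem hag
    have t3 : (1-g)*(y*g) ∈ 𝕁 := by
      have e1 : (1-g)*(y*g) = -(g*(y*g) - (y*g)*g) - y*(g*g - g) := by noncomm_ring
      rw [e1, hz, mul_zero, sub_zero]
      exact neg_mem (hab (y*g))
    have e2 : X*Y - 1 = (a*(y*g) - g) + a*(1-g) + (1-g)*(y*g) + (g*g - g) := by
      rw [hXdef, hYdef]; noncomm_ring
    rw [e2, hz, add_zero]
    exact add_mem (add_mem t1 t2) t3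
  have hYX : Y*X - 1 ∈ 𝕁 := df_of hl hred hXY
  have hXu : IsUnit X := isUnit_of_Jc_one (hXY : Jc (X*Y) 1) (hYX : Jc (Y*X) 1)
  have husq : X*X - 1 ∈ 𝕁 := usq_of h2 hds hXu
  have haag : a*a - g ∈ 𝕁 := by
    have e1 : a*a - g = (X*X - 1) - (a*(1-g)) - ((1-g)*a) - (g*g - g) := by
      rw [hXdef]; noncomm_ring
    have t2 : a*(1-g) ∈ 𝕁 := by
      have e2 : a*(1-g) = -(a*g - a) := by noncomm_ring
      rw [e2]; exact neg_mem hag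
    have t3 : (1-g)*a ∈ 𝕁 := by
      have e3 : (1-g)*a = -(g*a - a) := by noncomm_ring
      rw [e3]; exact neg_mem hga
    rw [e1, hz, sub_zero]
    exact sub_mem (sub_mem husq t2) t3
  have e1 : a*a*a - a = (a*a - g)*a + (g*a - a) := by noncomm_ring
  rw [e1]
  exact add_mem (J_mul_right haag a) hga


lemma ex_decomp (h2 : Is2DeltaU R) (hex : IsExchange R) (a : R) :
    ∃ e b : R, e*e = e ∧ b = a*(1-e) ∧
      (a*e)*(a*e) - e ∈ 𝕁 ∧
      ((1-a)*(1-e))*((1-a)*(1-e)) - (1-e) ∈ 𝕁 ∧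
      b*b - 2*b ∈ 𝕁 ∧ a*a - (e + 2*b) ∈ 𝕁 ∧ a*a*a - a - 3*b ∈ 𝕁 := by
  have hl := lift_of_ex hex
  have hred := red_of_ex h2 hex
  have hds := delta_sub_J hl hred (fun d hd => half_of_ex hex hd)
  obtain ⟨e, r, s, he, h1, hs2⟩ := hex a
  have hz : e*e - e = 0 := by rw [he, sub_self]
  have hab := fun rr => abelian_of_red hred he rr
  have hE : (1-e)*(1-e) = 1-e := by
    have e1 : (1-e)*(1-e) = (1-e) + (e*e - e) := by noncomm_ring
    rw [e1, hz, add_zero]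
  have hEe : (1-e)*e = 0 := by
    have e1 : (1-e)*e = -(e*e - e) := by noncomm_ring
    rw [e1, hz, neg_zero]
  have heE : e*(1-e) = 0 := by
    have e1 : e*(1-e) = -(e*e - e) := by noncomm_ring
    rw [e1, hz, neg_zero]
  -- X1 := a*e + (1-e)
  set X1 := a*e + (1-e) with hX1def
  set Y1 := e*r*e + (1-e) with hY1def
  have hX1Y1 : X1*Y1 - 1 ∈ 𝕁 := by
    have t1 : (a*e)*(e*r*e) - e ∈ 𝕁 := by
      have t1c : (a*r)*(e*e) - e = 0 := by rw [he, ← h1, he, sub_self]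
      have e1 : (a*e)*(e*r*e) - e = a*((e*e - e)*(r*e)) + a*((e*r - r*e)*e)
          + ((a*r)*(e*e) - e) := by noncomm_ring
      rw [e1, hz, t1c, zero_mul, mul_zero, zero_add, add_zero]
      exact J_mul_left (J_mul_right (hab r) e) a
    have t2 : (a*e)*(1-e) = 0 := by
      have e1 : (a*e)*(1-e) = a*(e*(1-e)) := by noncomm_ring
      rw [e1, heE, mul_zero]
    have t3 : (1-e)*(e*r*e) = 0 := by
      have e1 : (1-e)*(e*r*e) = ((1-e)*e)*(r*e) := by noncomm_ring
      rw [e1, hEe, zero_mul]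
    have e2 : X1*Y1 - 1 = ((a*e)*(e*r*e) - e) + (a*e)*(1-e) + (1-e)*(e*r*e)
        + (e*e - e) := by rw [hX1def, hY1def]; noncomm_ring
    rw [e2, hz, t2, t3, add_zero, add_zero, add_zero]
    exact t1
  have hX1u : IsUnit X1 := isUnit_of_Jc_one (hX1Y1 : Jc (X1*Y1) 1)
    ((df_of hl hred hX1Y1) : Jc (Y1*X1) 1)
  have K2 : (a*e)*(a*e) - e ∈ 𝕁 := by
    have husq := usq_of h2 hds hX1u
    have t2 : (a*e)*(1-e) = 0 := by
      have e1 : (a*e)*(1-e) = a*(e*(1-e)) := by noncomm_ring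
      rw [e1, heE, mul_zero]
    have t3 : (1-e)*(a*e) ∈ 𝕁 := by
      have e1 : (1-e)*(a*e) = -(e*(a*e) - (a*e)*e) - a*(e*e - e) := by noncomm_ring
      rw [e1, hz, mul_zero, sub_zero]
      exact neg_mem (hab (a*e))
    have e3 : (a*e)*(a*e) - e = (X1*X1 - 1) - (a*e)*(1-e) - (1-e)*(a*e)
        - (e*e - e) := by rw [hX1def]; noncomm_ring
    rw [e3, hz, t2, sub_zero, sub_zero]
    exact sub_mem husq t3
  -- X2 := w + e
  set w := (1-a)*(1-e) with hwdef
  set X2 := w + e with hX2def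
  set Y2 := (1-e)*s*(1-e) + e with hY2def
  have hwE : w*(1-e) = w := by rw [hwdef, mul_assoc, hE]
  have hwe : w*e = 0 := by
    have e1 : w*e = (1-a)*((1-e)*e) := by rw [hwdef]; noncomm_ring
    rw [e1, hEe, mul_zero]
  have hX2Y2 : X2*Y2 - 1 ∈ 𝕁 := by
    have hes1 : (e*s)*(1-e) ∈ 𝕁 := by
      have e1 : (e*s)*(1-e) = (e*s - s*e)*(1-e) - s*(e*e - e) := by noncomm_ring
      rw [e1, hz, mul_zero, sub_zero]
      exact J_mul_right (hab s) _
    have m1 : w*((1-e)*s*(1-e)) - (1-e) ∈ 𝕁 := by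
      have d1 : w*((1-e)*s*(1-e)) - ((1-a)*s)*(1-e) =
          (1-a)*(((e*e - e)*s)*(1-e)) - (1-a)*((e*s)*(1-e)) := by
        rw [hwdef]; noncomm_ring
      have d2 : ((1-a)*s)*(1-e) = 1-e := by rw [← hs2, hE]
      rw [d2] at d1
      rw [d1, hz, zero_mul, zero_mul, mul_zero, zero_sub]
      exact neg_mem (J_mul_left hes1 _)
    have t4 : e*((1-e)*s*(1-e)) = 0 := by
      have e1 : e*((1-e)*s*(1-e)) = (e*(1-e))*(s*(1-e)) := by noncomm_ring
      rw [e1, heE, zero_mul]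
    have e2 : X2*Y2 - 1 = (w*((1-e)*s*(1-e)) - (1-e)) + w*e + e*((1-e)*s*(1-e))
        + (e*e - e) := by rw [hX2def, hY2def]; noncomm_ring
    rw [e2, hz, hwe, t4, add_zero, add_zero, add_zero]
    exact m1
  have hX2u : IsUnit X2 := isUnit_of_Jc_one (hX2Y2 : Jc (X2*Y2) 1)
    ((df_of hl hred hX2Y2) : Jc (Y2*X2) 1)
  have K4 : w*w - (1-e) ∈ 𝕁 := by
    have husq := usq_of h2 hds hX2u
    have t5 : e*w ∈ 𝕁 := by
      have e1 : e*w = e*w - w*e := by rw [hwe, sub_zero]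
      rw [e1]
      exact hab w
    have e3 : w*w - (1-e) = (X2*X2 - 1) - w*e - e*w - (e*e - e) := by
      rw [hX2def]; noncomm_ring
    rw [e3, hz, hwe, sub_zero, sub_zero]
    exact sub_mem husq t5
  -- b := a*(1-e)
  set b := a*(1-e) with hbdef
  have hbw : (1-e) - w = b := by rw [hwdef, hbdef]; noncomm_ring
  have hbE : b*(1-e) = b := by rw [hbdef, mul_assoc, hE]
  have K6 : b*b - 2*b ∈ 𝕁 := by
    have t6 : (1-e)*w - w ∈ 𝕁 := by
      have e1 : (1-e)*w - w = -(e*w - w*e) := by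
        have e1' : (1-e)*w - w = -(e*w - w*e) - w*e := by noncomm_ring
        rw [e1', hwe, sub_zero]
      rw [e1]
      exact neg_mem (hab w)
    have e2 : b*b = (1-e)*(1-e) - (1-e)*w - w*(1-e) + w*w := by
      rw [← hbw]; noncomm_ring
    rw [e2, hE, hwE]
    have e3 : 1-e - (1-e)*w - w + w*w - 2*b = (w*w - (1-e)) - ((1-e)*w - w)
        - (2*b - 2*((1-e) - w)) := by noncomm_ring
    rw [e3, hbw, sub_self, sub_zero]
    exact sub_mem K4 t6
  have hae : a*e + b = a := by rw [hbdef]; noncomm_ring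
  have K7 : a*a - (e + 2*b) ∈ 𝕁 := by
    have cross1 : (a*e)*b ∈ 𝕁 := by
      have e1 : (a*e)*b = a*((e*a - a*e)*(1-e)) + (a*a)*(e*(1-e)) := by
        rw [hbdef]; noncomm_ring
      rw [e1, heE, mul_zero, add_zero]
      exact J_mul_left (J_mul_right (hab a) _) a
    have cross2 : b*(a*e) ∈ 𝕁 := by
      have e1 : b*(a*e) = a*((-(e*a - a*e))*e) + (a*a)*((1-e)*e) := by
        rw [hbdef]; noncomm_ring
      rw [e1, hEe, mul_zero, add_zero]
      exact J_mul_left (J_mul_right (neg_mem (hab a)) _) a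
    have e5 : a*a - (e + 2*b) = ((a*e)*(a*e) - e) + (a*e)*b + b*(a*e)
        + (b*b - 2*b) := by
      conv_lhs => rw [← hae]
      noncomm_ring
    rw [e5]
    exact add_mem (add_mem (add_mem K2 cross1) cross2) K6
  have K8 : a*a*a - a - 3*b ∈ 𝕁 := by
    have c1 : (a*a)*a - (e + 2*b)*a ∈ 𝕁 := by
      have h0 := J_mul_right K7 a
      have e0 : (a*a - (e + 2*b))*a = (a*a)*a - (e + 2*b)*a := by noncomm_ring
      rwa [e0] at h0
    have c3 : b*a - 2*b ∈ 𝕁 := by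
      have d1 : b*a - 2*b = a*((1-e)*a - a*(1-e)) + ((a*a) - (e + 2*b))*(1-e)
          + e*(1-e) + 2*(b*(1-e) - b) := by
        rw [hbdef]; noncomm_ring
      rw [d1, heE, hbE, sub_self, mul_zero, add_zero, add_zero]
      have t7 : (1-e)*a - a*(1-e) ∈ 𝕁 := by
        have e1 : (1-e)*a - a*(1-e) = -(e*a - a*e) := by noncomm_ring
        rw [e1]; exact neg_mem (hab a)
      exact add_mem (J_mul_left t7 a) (J_mul_right K7 _)
    have e6 : a*a*a - a - 3*b = ((a*a)*a - (e + 2*b)*a) + (e*a - a*e)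
        + 2*(b*a - 2*b) + (a*e + b - a) := by noncomm_ring
    rw [e6, hae, sub_self, add_zero]
    exact add_mem (add_mem c1 (hab a)) (J_mul_left c3 2)
  exact ⟨e, b, he, hbdef, K2, K4, K6, K7, K8⟩


lemma six_of_ex (h2 : Is2DeltaU R) (hex : IsExchange R) : (6:R) ∈ 𝕁 := by
  have hred := red_of_ex h2 hex
  obtain ⟨e, b, he, hb, K2, K4, K6, K7, K8⟩ := ex_decomp h2 hex (3:R)
  have hz : e*e - e = 0 := by rw [he, sub_self]
  have h8 : (8:R)*e ∈ 𝕁 := by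
    have e1 : (8:R)*e = (((3:R)*e)*((3:R)*e) - e) - 9*(e*e - e) := by noncomm_ring
    rw [e1, hz, mul_zero, sub_zero]
    exact K2
  have h16 : ((4:R)*e)*((4:R)*e) ∈ 𝕁 := by
    have e1 : ((4:R)*e)*((4:R)*e) = (8:R)*e + ((8:R)*e + 16*(e*e - e)) := by noncomm_ring
    rw [e1, hz, mul_zero, add_zero]
    exact add_mem h8 h8
  have h4 : (4:R)*e ∈ 𝕁 := hred _ h16
  have h2e : (2:R)*e ∈ 𝕁 := by
    apply hred
    have e1 : ((2:R)*e)*((2:R)*e) = (4:R)*e + 4*(e*e - e) := by noncomm_ring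
    rw [e1, hz, mul_zero, add_zero]
    exact h4
  have hE : (1-e)*(1-e) = 1-e := by
    have e1 : (1-e)*(1-e) = (1-e) + (e*e - e) := by noncomm_ring
    rw [e1, hz, add_zero]
  have h3E : (3:R)*(1-e) ∈ 𝕁 := by
    have e0 : ((1-(3:R))*(1-e))*((1-(3:R))*(1-e)) = 4*((1-e)*(1-e)) := by
      rw [show (1-(3:R)) = -2 by norm_num]
      generalize (1:R) - e = X
      noncomm_ring
    rw [e0, hE] at K4
    have e1 : (3:R)*(1-e) = 4*(1-e) - (1-e) := by
      generalize (1:R) - e = X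
      noncomm_ring
    rw [e1]
    exact K4
  have h3e : (3:R) - e ∈ 𝕁 := by
    have e1 : (3:R) - e = (2:R)*e + (3:R)*(1-e) := by
      rw [mul_sub, mul_one,
        show (3:R)*e = 2*e + e by rw [show (3:R) = 2+1 by norm_num, add_mul, one_mul]]
      abel
    rw [e1]
    exact add_mem h2e h3E
  have e1 : (6:R) = (3:R)*((3:R) - e) + (2:R)*e + (-((3:R) - e)) := by
    rw [mul_sub, show (3:R)*3 = 6+3 by norm_num,
      show (3:R)*e = 2*e + e by rw [show (3:R) = 2+1 by norm_num, add_mul, one_mul]]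
    abel
  rw [e1]
  exact add_mem (add_mem (J_mul_left h3e 3) h2e) (neg_mem h3e)

lemma three_sq_of_ex (h2 : Is2DeltaU R) (hex : IsExchange R) (six : (6:R) ∈ 𝕁) :
    ∀ x : R, 3*(x*x) - 3*x ∈ 𝕁 := by
  have hred := red_of_ex h2 hex
  intro x
  obtain ⟨e, b, he, hb, K2, K4, K6, K7, K8⟩ := ex_decomp h2 hex x
  have hz : e*e - e = 0 := by rw [he, sub_self]
  have hzg : (9:R)*(x*x) - 3*e ∈ 𝕁 := by
    have e1 : (9:R)*(x*x) - 3*e = 3*(x*x - (e + 2*b)) + 6*(x*x) + 6*b := by noncomm_ring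
    rw [e1]
    exact add_mem (add_mem (J_mul_left K7 3) (J_mul_right six (x*x))) (J_mul_right six b)
  have hgg : ((3:R)*e)*((3:R)*e) - 3*e ∈ 𝕁 := by
    have e1 : ((3:R)*e)*((3:R)*e) - 3*e = 6*e + 9*(e*e - e) := by noncomm_ring
    rw [e1, hz, mul_zero, add_zero]
    exact J_mul_right six e
  have hzz : ((9:R)*(x*x))*((9:R)*(x*x)) - (9:R)*(x*x) ∈ 𝕁 := by
    have e1 : ((9:R)*(x*x))*((9:R)*(x*x)) - (9:R)*(x*x) =
        ((9:R)*(x*x) - 3*e)*((9:R)*(x*x)) + ((3:R)*e)*((9:R)*(x*x) - 3*e)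
        + (((3:R)*e)*((3:R)*e) - 3*e) + (-((9:R)*(x*x) - 3*e)) := by noncomm_ring
    rw [e1]
    exact add_mem (add_mem (add_mem (J_mul_right hzg _) (J_mul_left hzg _)) hgg)
      (neg_mem hzg)
  have hsq : ((9:R)*(x*x) - 3*x)*((9:R)*(x*x) - 3*x) ∈ 𝕁 := by
    have e1 : ((9:R)*(x*x) - 3*x)*((9:R)*(x*x) - 3*x) =
        (((9:R)*(x*x))*((9:R)*(x*x)) - (9:R)*(x*x)) + 6*(3*(x*x)) - 6*(9*(x*x*x)) := by
      noncomm_ring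
    rw [e1]
    exact sub_mem (add_mem hzz (J_mul_right six _)) (J_mul_right six _)
  have h93 : (9:R)*(x*x) - 3*x ∈ 𝕁 := hred _ hsq
  have e1 : (3:R)*(x*x) - 3*x = ((9:R)*(x*x) - 3*x) - 6*(x*x) := by noncomm_ring
  rw [e1]
  exact sub_mem h93 (J_mul_right six _)

lemma cube_of_ex (h2 : Is2DeltaU R) (hex : IsExchange R) : ∀ x : R, x*x*x - x ∈ 𝕁 := by
  intro x
  have six := six_of_ex h2 hex
  have h3sq := three_sq_of_ex h2 hex six
  obtain ⟨e, b, he, hb, K2, K4, K6, K7, K8⟩ := ex_decomp h2 hex x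
  have h3b : (3:R)*b ∈ 𝕁 := by
    have e2 : (3:R)*b = (3*(b*b) - 3*b) - 3*(b*b - 2*b) := by noncomm_ring
    rw [e2]
    exact sub_mem (h3sq b) (J_mul_left K6 3)
  have e1 : x*x*x - x = (x*x*x - x - 3*b) + 3*b := by abel
  rw [e1]
  exact add_mem K8 h3b


set_option maxHeartbeats 1000000 in
lemma strong_lift (hl : LIFT R) {t : R} (ht : t - t*t ∈ 𝕁) :
    ∃ q r : R, q*q = q ∧ q - t ∈ 𝕁 ∧ q = t*r*t := by
  obtain ⟨e₀, he₀, hte₀⟩ := hl t ht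
  set j₁ := (t - e₀)*e₀ with hj1def
  have hj1J : j₁ ∈ 𝕁 := J_mul_right hte₀ e₀
  obtain ⟨u, huu⟩ := J_one_add hj1J
  have hui : (↑u⁻¹ : R) * (1 + j₁) = 1 := by rw [← huu]; exact u.inv_mul
  have hz0 : e₀*e₀ - e₀ = 0 := by rw [he₀, sub_self]
  have hue : (1 + j₁) * e₀ = t * e₀ := by
    have e1 : (1 + j₁) * e₀ - t * e₀ = (t - e₀ - 1)*(e₀*e₀ - e₀) := by
      rw [hj1def]; noncomm_ring
    rw [hz0, mul_zero] at e1
    exact sub_eq_zero.mp e1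
  set e₁ := (1 + j₁) * e₀ * ↑u⁻¹ with he1def
  have he1 : e₁ * e₁ = e₁ := by
    rw [he1def]
    calc (1 + j₁) * e₀ * ↑u⁻¹ * ((1 + j₁) * e₀ * ↑u⁻¹)
        = (1 + j₁) * e₀ * (↑u⁻¹ * (1 + j₁)) * e₀ * ↑u⁻¹ := by noncomm_ring
    _ = (1 + j₁) * (e₀ * e₀) * ↑u⁻¹ := by rw [hui]; noncomm_ring
    _ = (1 + j₁) * e₀ * ↑u⁻¹ := by rw [he₀]
  have he1t : e₁ = t * (e₀ * ↑u⁻¹) := by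
    rw [he1def, hue]; noncomm_ring
  have he1c : e₁ - e₀ ∈ 𝕁 := by
    have huc : e₀ * (1 + j₁) * ↑u⁻¹ = e₀ := by
      calc e₀ * (1 + j₁) * ↑u⁻¹ = e₀ * ((1 + j₁) * ↑u⁻¹) := by rw [mul_assoc]
      _ = e₀ := by rw [← huu, u.mul_inv, mul_one]
    have e2 : (1 + j₁)*e₀*↑u⁻¹ - e₀ = (j₁*e₀ - e₀*j₁) * ↑u⁻¹
        + (e₀*(1 + j₁)*↑u⁻¹ - e₀) := by noncomm_ring
    rw [huc, sub_self, add_zero] at e2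
    rw [he1def, e2]
    exact J_mul_right (sub_mem (J_mul_right hj1J e₀) (J_mul_left hj1J e₀)) _
  have hte1 : t - e₁ ∈ 𝕁 := by
    have e2 : t - e₁ = (t - e₀) - (e₁ - e₀) := by abel
    rw [e2]; exact sub_mem hte₀ he1c
  have hz1 : e₁*e₁ - e₁ = 0 := by rw [he1, sub_self]
  set j₂ := e₁*(t - e₁) with hj2def
  have hj2J : j₂ ∈ 𝕁 := J_mul_left hte1 e₁
  obtain ⟨v, hvv⟩ := J_one_add hj2J
  have hvi : (↑v⁻¹ : R) * (1 + j₂) = 1 := by rw [← hvv]; exact v.inv_mul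
  have hvi2 : (1 + j₂) * (↑v⁻¹ : R) = 1 := by rw [← hvv]; exact v.mul_inv
  have hev : e₁ * (1 + j₂) = e₁ * t := by
    have e1 : e₁ * (1 + j₂) - e₁ * t = (e₁*e₁ - e₁)*t - e₁*(e₁*e₁ - e₁)
        - (e₁*e₁ - e₁) := by rw [hj2def]; noncomm_ring
    rw [hz1, mul_zero, zero_mul, sub_zero, sub_zero] at e1
    exact sub_eq_zero.mp e1
  set e₂ := ↑v⁻¹ * e₁ * (1 + j₂) with he2def
  have he2 : e₂ * e₂ = e₂ := by
    rw [he2def]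
    calc ↑v⁻¹ * e₁ * (1 + j₂) * (↑v⁻¹ * e₁ * (1 + j₂))
        = ↑v⁻¹ * e₁ * ((1 + j₂) * ↑v⁻¹) * e₁ * (1 + j₂) := by noncomm_ring
    _ = ↑v⁻¹ * (e₁ * e₁) * (1 + j₂) := by rw [hvi2]; noncomm_ring
    _ = ↑v⁻¹ * e₁ * (1 + j₂) := by rw [he1]
  have hRt : e₂ = (↑v⁻¹ * e₁) * t := by
    rw [he2def, mul_assoc (↑v⁻¹ : R) e₁ (1 + j₂), hev, ← mul_assoc]
  have hvinv : (↑v⁻¹ : R) = 1 - j₂ * ↑v⁻¹ := by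
    calc (↑v⁻¹ : R) = (1 + j₂) * ↑v⁻¹ - j₂ * ↑v⁻¹ := by noncomm_ring
    _ = 1 - j₂ * ↑v⁻¹ := by rw [hvi2]
  have step1 : e₂ = e₁*(1 + j₂) - j₂*(↑v⁻¹*e₁*(1 + j₂)) := by
    rw [he2def]
    nth_rewrite 1 [hvinv]
    noncomm_ring
  have step2 : e₁ * ((1 + j₂) - (t - e₁)*(↑v⁻¹*e₁*(1 + j₂)))
      = e₁*(1 + j₂) - j₂*(↑v⁻¹*e₁*(1 + j₂)) := by
    rw [hj2def]; noncomm_ring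
  have hLt : e₂ = e₁ * ((1 + j₂) - (t - e₁)*(↑v⁻¹*e₁*(1 + j₂))) := step1.trans step2.symm
  have htR : e₂ = t * ((e₀ * ↑u⁻¹) * ((1 + j₂) - (t - e₁)*(↑v⁻¹*e₁*(1 + j₂)))) := by
    rw [hLt, he1t, mul_assoc]
  have he2c : e₂ - t ∈ 𝕁 := by
    have e4 : ↑v⁻¹*(e₁*(1 + j₂) - (1 + j₂)*e₁) = e₂ - (↑v⁻¹*(1 + j₂))*e₁ := by
      rw [he2def]; noncomm_ring
    rw [hvi, one_mul] at e4
    have e5 : e₁*(1 + j₂) - (1 + j₂)*e₁ = e₁*j₂ - j₂*e₁ := by noncomm_ring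
    rw [e5] at e4
    have c1 : e₂ - e₁ ∈ 𝕁 := by
      rw [← e4]
      exact J_mul_left (sub_mem (J_mul_left hj2J e₁) (J_mul_right hj2J e₁)) _
    have e6 : e₂ - t = (e₂ - e₁) - (t - e₁) := by abel
    rw [e6]; exact sub_mem c1 hte1
  refine ⟨e₂, ((e₀ * ↑u⁻¹) * ((1 + j₂) - (t - e₁)*(↑v⁻¹*e₁*(1 + j₂)))) * (↑v⁻¹ * e₁),
    he2, he2c, ?_⟩
  calc e₂ = e₂ * e₂ := he2.symm
  _ = (t * ((e₀ * ↑u⁻¹) * ((1 + j₂) - (t - e₁)*(↑v⁻¹*e₁*(1 + j₂))))) * ((↑v⁻¹ * e₁) * t) := by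
      rw [← htR, ← hRt]
  _ = t * (((e₀ * ↑u⁻¹) * ((1 + j₂) - (t - e₁)*(↑v⁻¹*e₁*(1 + j₂)))) * (↑v⁻¹ * e₁)) * t := by
      rw [mul_assoc t _ ((↑v⁻¹ * e₁) * t), ← mul_assoc _ (↑v⁻¹ * e₁) t, ← mul_assoc t _ t]


set_option maxHeartbeats 1000000 in
/-- Lemma A: suitable idempotent from an element idempotent mod J -/
lemma lemA (hl : LIFT R) {b : R} (hb : b - b*b ∈ 𝕁) :
    ∃ e r s : R, e*e = e ∧ e = b*r ∧ 1 - e = (1-b)*s := by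
  obtain ⟨e₀, he₀, hbe₀⟩ := hl b hb
  set j₁ := (b - e₀)*e₀ with hj1def
  have hj1J : j₁ ∈ 𝕁 := J_mul_right hbe₀ e₀
  obtain ⟨u, huu⟩ := J_one_add hj1J
  have hui : (↑u⁻¹ : R) * (1 + j₁) = 1 := by rw [← huu]; exact u.inv_mul
  have hz0 : e₀*e₀ - e₀ = 0 := by rw [he₀, sub_self]
  have hue : (1 + j₁) * e₀ = b * e₀ := by
    have e1 : (1 + j₁) * e₀ - b * e₀ = (b - e₀ - 1)*(e₀*e₀ - e₀) := by
      rw [hj1def]; noncomm_ring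
    rw [hz0, mul_zero] at e1
    exact sub_eq_zero.mp e1
  set f := (1 + j₁) * e₀ * ↑u⁻¹ with hfdef
  have hf : f * f = f := by
    rw [hfdef]
    calc (1 + j₁) * e₀ * ↑u⁻¹ * ((1 + j₁) * e₀ * ↑u⁻¹)
        = (1 + j₁) * e₀ * (↑u⁻¹ * (1 + j₁)) * e₀ * ↑u⁻¹ := by noncomm_ring
    _ = (1 + j₁) * (e₀ * e₀) * ↑u⁻¹ := by rw [hui]; noncomm_ring
    _ = (1 + j₁) * e₀ * ↑u⁻¹ := by rw [he₀]
  have hfb : f = b * (e₀ * ↑u⁻¹) := by rw [hfdef, hue]; noncomm_ring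
  have hfc : f - b ∈ 𝕁 := by
    have huc : e₀ * (1 + j₁) * ↑u⁻¹ = e₀ := by
      calc e₀ * (1 + j₁) * ↑u⁻¹ = e₀ * ((1 + j₁) * ↑u⁻¹) := by rw [mul_assoc]
      _ = e₀ := by rw [← huu, u.mul_inv, mul_one]
    have e2 : (1 + j₁)*e₀*↑u⁻¹ - e₀ = (j₁*e₀ - e₀*j₁) * ↑u⁻¹
        + (e₀*(1 + j₁)*↑u⁻¹ - e₀) := by noncomm_ring
    rw [huc, sub_self, add_zero] at e2
    have c1 : f - e₀ ∈ 𝕁 := by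
      rw [hfdef, e2]
      exact J_mul_right (sub_mem (J_mul_right hj1J e₀) (J_mul_left hj1J e₀)) _
    have e3 : f - b = (f - e₀) - (b - e₀) := by abel
    rw [e3]; exact sub_mem c1 hbe₀
  set j₂ := (f - b)*(1 - f) with hj2def
  have hj2J : j₂ ∈ 𝕁 := J_mul_right hfc _
  obtain ⟨v, hvv⟩ := J_one_add hj2J
  have hvi : (↑v⁻¹ : R) * (1 + j₂) = 1 := by rw [← hvv]; exact v.inv_mul
  have hvi2 : (1 + j₂) * (↑v⁻¹ : R) = 1 := by rw [← hvv]; exact v.mul_inv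
  have hzf : f*f - f = 0 := by rw [hf, sub_self]
  have hvf : (1 + j₂) * f = f := by
    have e1 : (1 + j₂) * f - f = -((f - b)*(f*f - f)) := by
      rw [hj2def]; noncomm_ring
    rw [hzf, mul_zero, neg_zero] at e1
    exact sub_eq_zero.mp e1
  have hfv : ↑v⁻¹ * f = f := by
    have e1 : (↑v⁻¹ * (1 + j₂)) * f = ↑v⁻¹ * ((1 + j₂) * f) := by rw [mul_assoc]
    rw [hvi, one_mul, hvf] at e1
    exact e1.symm
  set E := f * ↑v⁻¹ with hEdef
  have hE : E * E = E := by
    rw [hEdef]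
    calc f * ↑v⁻¹ * (f * ↑v⁻¹) = f * (↑v⁻¹ * f) * ↑v⁻¹ := by noncomm_ring
    _ = f * f * ↑v⁻¹ := by rw [hfv]
    _ = f * ↑v⁻¹ := by rw [hf]
  have hEb : E = b * ((e₀ * ↑u⁻¹) * ↑v⁻¹) := by
    rw [hEdef, hfb, mul_assoc]
  have hvmf : (1 + j₂) - f = (1-b)*(1-f) := by
    have e1 : ((1 + j₂) - f) - (1-b)*(1-f) = -(f*f - f) := by
      rw [hj2def]; noncomm_ring
    rw [hzf, neg_zero] at e1
    exact sub_eq_zero.mp e1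
  have h1E : 1 - E = (1-b)*((1-f) * ↑v⁻¹) := by
    calc 1 - E = ((1 + j₂) - f) * ↑v⁻¹ := by
          rw [hEdef, sub_mul, hvi2]
    _ = ((1-b)*(1-f)) * ↑v⁻¹ := by rw [hvmf]
    _ = (1-b)*((1-f) * ↑v⁻¹) := by rw [mul_assoc]
  exact ⟨E, (e₀ * ↑u⁻¹) * ↑v⁻¹, (1-f) * ↑v⁻¹, hE, hEb, h1E⟩

set_option maxHeartbeats 1000000 in
/-- main construction: from lifting and x³ ≡ x mod J, semi-tripotency follows -/
lemma key_of_lift_cube (hl : LIFT R) (hc : ∀ x : R, x*x*x - x ∈ 𝕁) (a : R) :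
    ∃ e j : R, e^3 = e ∧ j ∈ 𝕁 ∧ a = e + j := by
  have six : (6:R) ∈ 𝕁 := by
    have h := hc 2
    have e1 : (2:R)*2*2 - 2 = 6 := by norm_num
    rwa [e1] at h
  have h3sq : ∀ x : R, 3*(x*x) - 3*x ∈ 𝕁 := by
    intro x
    have e1 : 3*(x*x) + 3*x = ((x+1)*(x+1)*(x+1) - (x+1)) - (x*x*x - x) := by
      noncomm_ring
    have c1 : 3*(x*x) + 3*x ∈ 𝕁 := by rw [e1]; exact sub_mem (hc (x+1)) (hc x)
    have e2 : 3*(x*x) - 3*x = (3*(x*x) + 3*x) - 6*x := by noncomm_ring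
    rw [e2]; exact sub_mem c1 (J_mul_right six x)
  have hca := hc a
  have hca4 : a*(a*a*a - a) ∈ 𝕁 := J_mul_left hca a
  have h3a := h3sq a
  set P := -(4*(a*a) + a) with hPdef
  set Q := -(4*(a*a)) + 4*a with hQdef
  have hPP : P - P*P ∈ 𝕁 := by
    have e1 : P - P*P = -(16*(a*(a*a*a - a)) + 8*(a*a*a - a) + 7*(3*(a*a) - 3*a)
        + 6*(5*a)) := by rw [hPdef]; noncomm_ring
    rw [e1]
    exact neg_mem (add_mem (add_mem (add_mem (J_mul_left hca4 16) (J_mul_left hca 8))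
      (J_mul_left h3a 7)) (J_mul_right six _))
  have hQQ : Q*Q - Q ∈ 𝕁 := by
    have e1 : Q*Q - Q = 16*(a*(a*a*a - a)) - 32*(a*a*a - a) + 12*(3*(a*a) - 3*a) := by
      rw [hQdef]; noncomm_ring
    rw [e1]
    exact add_mem (sub_mem (J_mul_left hca4 16) (J_mul_left hca 32)) (J_mul_left h3a 12)
  have hPQ : P*Q ∈ 𝕁 := by
    have e1 : P*Q = 16*(a*(a*a*a - a)) - 12*(a*a*a - a) + 4*(3*(a*a) - 3*a) := by
      rw [hPdef, hQdef]; noncomm_ring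
    rw [e1]
    exact add_mem (sub_mem (J_mul_left hca4 16) (J_mul_left hca 12)) (J_mul_left h3a 4)
  have hQP : Q*P ∈ 𝕁 := by
    have e1 : Q*P = 16*(a*(a*a*a - a)) - 12*(a*a*a - a) + 4*(3*(a*a) - 3*a) := by
      rw [hPdef, hQdef]; noncomm_ring
    rw [e1]
    exact add_mem (sub_mem (J_mul_left hca4 16) (J_mul_left hca 12)) (J_mul_left h3a 4)
  obtain ⟨p, hp, hPp⟩ := hl P hPP
  have hpQ : p*Q ∈ 𝕁 := by
    have e1 : p*Q = -((P - p))*Q + P*Q := by noncomm_ring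
    rw [e1]
    exact add_mem (J_mul_right (neg_mem hPp) Q) hPQ
  have hQp : Q*p ∈ 𝕁 := by
    have e1 : Q*p = Q*(-(P - p)) + Q*P := by noncomm_ring
    rw [e1]
    exact add_mem (J_mul_left (neg_mem hPp) Q) hQP
  set t := (1-p)*Q*(1-p) with htdef
  have htQ : t - Q ∈ 𝕁 := by
    have e1 : t - Q = -((p*Q)*(1-p)) - Q*p := by rw [htdef]; noncomm_ring
    rw [e1]
    exact sub_mem (neg_mem (J_mul_right hpQ _)) hQp
  have htt : t - t*t ∈ 𝕁 := by
    have c1 : Jc t Q := htQ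
    have c2 : Jc (t*t) (Q*Q) := c1.mul c1
    have c3 : Jc t (t*t) := (c1.trans (Jc.symm (hQQ : Jc (Q*Q) Q))).trans c2.symm
    exact c3
  obtain ⟨q, r, hq, hqt, hqr⟩ := strong_lift hl htt
  have hpt : p * t = 0 := by
    have e1 : p * t = (p*(1-p))*(Q*(1-p)) := by rw [htdef]; noncomm_ring
    have e2 : p*(1-p) = 0 := by
      have : p*(1-p) = -(p*p - p) := by noncomm_ring
      rw [this, hp, sub_self, neg_zero]
    rw [e1, e2, zero_mul]
  have htp : t * p = 0 := by
    have e1 : t * p = ((1-p)*Q)*((1-p)*p) := by rw [htdef]; noncomm_ring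
    have e2 : (1-p)*p = 0 := by
      have : (1-p)*p = -(p*p - p) := by noncomm_ring
      rw [this, hp, sub_self, neg_zero]
    rw [e1, e2, mul_zero]
  have hpq : p * q = 0 := by
    rw [hqr]
    calc p * (t*r*t) = (p*t)*(r*t) := by noncomm_ring
    _ = 0 := by rw [hpt, zero_mul]
  have hqp : q * p = 0 := by
    rw [hqr]
    calc (t*r*t) * p = (t*r)*(t*p) := by noncomm_ring
    _ = 0 := by rw [htp, mul_zero]
  refine ⟨p - q, a - (p - q), ?_, ?_, by abel⟩
  · have e1 : (p - q)^3 = ((p*p - p*q) - (q*p - q*q))*(p - q) := by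
      rw [pow_succ, pow_two]; noncomm_ring
    rw [e1, hp, hpq, hqp, hq, sub_zero, zero_sub, sub_neg_eq_add]
    have e2 : (p + q)*(p - q) = (p*p - p*q) + (q*p - q*q) := by noncomm_ring
    rw [e2, hp, hpq, hqp, hq, sub_zero, zero_sub]
    abel
  · have e1 : a - (p - q) = (a - (P - Q)) + (P - p) + (q - Q) := by abel
    have e2 : a - (P - Q) = 6*a := by rw [hPdef, hQdef]; noncomm_ring
    rw [e1, e2]
    refine add_mem (add_mem (J_mul_right six a) hPp) ?_
    have e3 : q - Q = (q - t) + (t - Q) := by abel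
    rw [e3]; exact add_mem hqt htQ


lemma J_sub_Delta {j : R} (hj : j ∈ 𝕁) : j ∈ Delta R := by
  intro u
  have c : Jc (j + ↑u) ↑u := by
    have : (j + ↑u) - ↑u = j := by abel
    rw [Jc, this]; exact hj
  exact c.isUnit u.isUnit

lemma sub_of_three (h3 : ∀ a : R, ∃ e j : R, e^3 = e ∧ j ∈ 𝕁 ∧ a = e + j)
    {a : R} : ∀ e j : R, j ∈ 𝕁 → a = e + j → a - e ∈ 𝕁 := by
  intro e j hj heq
  have : a - e = j := by rw [heq]; abel
  rw [this]; exact hj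

lemma cube_of_three (h3 : ∀ a : R, ∃ e j : R, e^3 = e ∧ j ∈ 𝕁 ∧ a = e + j) :
    ∀ x : R, x*x*x - x ∈ 𝕁 := by
  intro x
  obtain ⟨e, j, he3, hj, heq⟩ := h3 x
  have hxe : x - e ∈ 𝕁 := sub_of_three h3 e j hj heq
  have e3 : e*e*e = e := by
    have : e^3 = e*e*e := by rw [pow_succ, pow_two]
    rw [← this, he3]
  have e1 : x*x*x - x = (x*x)*(x - e) + x*(x - e)*e + (x - e)*(e*e)
      + (e*e*e - e) - (x - e) := by noncomm_ring
  rw [e1, e3, sub_self, add_zero]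
  exact sub_mem (add_mem (add_mem (J_mul_left hxe _) (J_mul_right (J_mul_left hxe x) e))
    (J_mul_right hxe _)) hxe

lemma lift_of_three (h3 : ∀ a : R, ∃ e j : R, e^3 = e ∧ j ∈ 𝕁 ∧ a = e + j) : LIFT R := by
  intro a ha
  obtain ⟨e, j, he3, hj, heq⟩ := h3 a
  have hae : a - e ∈ 𝕁 := sub_of_three h3 e j hj heq
  have e3 : e*e*e = e := by
    have : e^3 = e*e*e := by rw [pow_succ, pow_two]
    rw [← this, he3]
  have hee : e - e*e ∈ 𝕁 := by
    have e1 : e - e*e = -(a - e) + (a - a*a) + a*(a - e) + (a - e)*e := by noncomm_ring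
    rw [e1]
    exact add_mem (add_mem (add_mem (neg_mem hae) ha) (J_mul_left hae a)) (J_mul_right hae e)
  refine ⟨e*e, ?_, ?_⟩
  · have e2 : (e*e)*(e*e) = (e*e*e)*e := by noncomm_ring
    rw [e2, e3]
  · have e4 : a - e*e = (a - e) + (e - e*e) := by abel
    rw [e4]; exact add_mem hae hee

lemma twoDU_of_three (h3 : ∀ a : R, ∃ e j : R, e^3 = e ∧ j ∈ 𝕁 ∧ a = e + j) :
    Is2DeltaU R := by
  intro u
  apply J_sub_Delta
  have hc := cube_of_three h3 (↑u : R)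
  have h1 : (↑u⁻¹ : R) * ↑u = 1 := u.inv_mul
  have e1 : (↑u⁻¹ : R)*((↑u:R)*↑u*↑u - ↑u) = ((↑u⁻¹:R)*↑u)*(↑u*↑u) - (↑u⁻¹:R)*↑u := by
    noncomm_ring
  have e2 : (↑u⁻¹ : R)*((↑u:R)*↑u*↑u - ↑u) = (↑u:R)*↑u - 1 := by rw [e1, h1]; noncomm_ring
  have : (↑u:R)*↑u - 1 ∈ 𝕁 := by rw [← e2]; exact J_mul_left hc _
  rwa [← pow_two] at this

lemma three_to_one (h3 : ∀ a : R, ∃ e j : R, e^3 = e ∧ j ∈ 𝕁 ∧ a = e + j) :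
    IsSemiregular R ∧ Is2DeltaU R := by
  refine ⟨⟨?_, ?_⟩, twoDU_of_three h3⟩
  · intro a
    obtain ⟨e, j, he3, hj, heq⟩ := h3 a
    have hae : a - e ∈ 𝕁 := sub_of_three h3 e j hj heq
    have e3 : e*e*e = e := by
      have : e^3 = e*e*e := by rw [pow_succ, pow_two]
      rw [← this, he3]
    refine ⟨e, ?_⟩
    have e1 : a - a*e*a = (a - e) + (e - e*e*e) - (a - e)*(e*a) - (e*e)*(a - e) := by
      noncomm_ring
    rw [e1, e3, sub_self, add_zero]
    exact sub_mem (sub_mem hae (J_mul_right hae _)) (J_mul_left hae _)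
  · intro a ha
    exact lift_of_three h3 a (by rw [← pow_two]; exact ha)

lemma three_to_two (h3 : ∀ a : R, ∃ e j : R, e^3 = e ∧ j ∈ 𝕁 ∧ a = e + j) :
    IsExchange R ∧ Is2DeltaU R := by
  refine ⟨?_, twoDU_of_three h3⟩
  intro a
  have hb : a*a - (a*a)*(a*a) ∈ 𝕁 := by
    have e1 : a*a - (a*a)*(a*a) = -(a*(a*a*a - a)) := by noncomm_ring
    rw [e1]; exact neg_mem (J_mul_left (cube_of_three h3 a) a)
  obtain ⟨E, r, s, hE, hEb, h1E⟩ := lemA (lift_of_three h3) hb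
  refine ⟨E, a*r, (1+a)*s, hE, ?_, ?_⟩
  · rw [hEb, mul_assoc]
  · rw [h1E]
    have e1 : (1 - a*a)*s = (1-a)*((1+a)*s) := by noncomm_ring
    rw [← e1]

end TDU

theorem semiregular_is2DeltaU_tfae (R : Type*) [Ring R] :
    List.TFAE
      [IsSemiregular R ∧ Is2DeltaU R,
       IsExchange R ∧ Is2DeltaU R,
       ∀ a : R, ∃ e j : R, e ^ 3 = e ∧ j ∈ Ideal.jacobson (⊥ : Ideal R) ∧ a = e + j] := by
  tfae_have 1 → 3 := fun h a =>
    TDU.key_of_lift_cube (TDU.lift_of_sr h.1) (TDU.cube_of_sr h.2 h.1) a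
  tfae_have 2 → 3 := fun h a =>
    TDU.key_of_lift_cube (TDU.lift_of_ex h.1) (TDU.cube_of_ex h.2 h.1) a
  tfae_have 3 → 1 := fun h => TDU.three_to_one h
  tfae_have 3 → 2 := fun h => TDU.three_to_two h
  tfae_finish
end

section
/- Let R be a ring. Then R is a 2-ΔU ring if and only if the formal power series ring R[[x]] is a 2-ΔU ring. -/
theorem is2DeltaU_iff_powerSeries (R : Type*) [Ring R] :
    Is2DeltaU R ↔ Is2DeltaU (PowerSeries R) := by
  constructor
  · intro h U V
    rw [PowerSeries.isUnit_iff_constantCoeff, map_add, map_sub, map_pow, map_one]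
    have hU : IsUnit (PowerSeries.constantCoeff (R := R) (U : PowerSeries R)) :=
      PowerSeries.isUnit_iff_constantCoeff.mp U.isUnit
    have hV : IsUnit (PowerSeries.constantCoeff (R := R) (V : PowerSeries R)) :=
      PowerSeries.isUnit_iff_constantCoeff.mp V.isUnit
    obtain ⟨v, hv⟩ := hV
    have := h hU.unit v
    simpa [hv] using this
  · intro h u v
    have key := h (Units.map (PowerSeries.C (R := R)).toMonoidHom u)
      (Units.map (PowerSeries.C (R := R)).toMonoidHom v)
    have := key.map (PowerSeries.constantCoeff (R := R))
    simpa using this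
end

section
/- Let R be a ring and M an (R,R)-bimodule. The trivial extension T(R, M) = {(r, m) : r ∈ R, m ∈ M}, with componentwise addition and multiplication (r, m)(s, n) = (rs, rn + ms), is a 2-ΔU ring if and only if R is a 2-ΔU ring. -/
theorem trivSqZeroExt_is2DeltaU_iff (R M : Type*) [Ring R] [AddCommGroup M]
    [Module R M] [Module Rᵐᵒᵖ M] [SMulCommClass R Rᵐᵒᵖ M] :
    Is2DeltaU (TrivSqZeroExt R M) ↔ Is2DeltaU R := by
  constructor
  · intro h u v
    have hu : IsUnit (TrivSqZeroExt.inl (u : R) : TrivSqZeroExt R M) :=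
      TrivSqZeroExt.isUnit_inl_iff.mpr u.isUnit
    have hv : IsUnit (TrivSqZeroExt.inl (v : R) : TrivSqZeroExt R M) :=
      TrivSqZeroExt.isUnit_inl_iff.mpr v.isUnit
    have := h hu.unit hv.unit
    rw [IsUnit.unit_spec, IsUnit.unit_spec] at this
    rw [TrivSqZeroExt.isUnit_iff_isUnit_fst] at this
    simpa using this
  · intro h u v
    rw [TrivSqZeroExt.isUnit_iff_isUnit_fst]
    have hu : IsUnit ((u : TrivSqZeroExt R M).fst) :=
      TrivSqZeroExt.isUnit_iff_isUnit_fst.mp u.isUnit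
    have hv : IsUnit ((v : TrivSqZeroExt R M).fst) :=
      TrivSqZeroExt.isUnit_iff_isUnit_fst.mp v.isUnit
    have := h hu.unit hv.unit
    rw [IsUnit.unit_spec, IsUnit.unit_spec] at this
    simpa using this
end
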